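/- Consider the unweighted path graph on V_k = {-k,...,k} with u > 0 and H_k = L + u δ_0, with spectral gap Γ(k) = λ_1(H_k) - λ_0(H_k). Then (2k+1)² · Γ(k) → 0 as k → ∞. In particular, the gap closes strictly faster than the gap of the free Laplacian on the same graph (for which the rescaled gap tends to π²). -/

import Mathlib

open Filter Real Matrix

/-- Real version of the weighted Laplacian plus potential `u δ₀` on the path graph with
vertex set `{-k, …, k}` (encoded as `Fin (2*k+1)`, the vertex of index `i` being `i - k`):
`(H f)(v) = ∑_{w : |v-w|=1} γ v w (f v - f w) + u · [v = 0] · f v`. -/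
noncomputable def pathHR (k : ℕ) (γ : ℤ → ℤ → ℝ) (u : ℝ) :
    Matrix (Fin (2 * k + 1)) (Fin (2 * k + 1)) ℝ := fun i j =>
  if i = j then
    ((∑ w : Fin (2 * k + 1),
        if |((i : ℤ) - k) - ((w : ℤ) - k)| = 1 then γ ((i : ℤ) - k) ((w : ℤ) - k) else 0)
      + if ((i : ℤ) - k) = 0 then u else 0)
  else if |((i : ℤ) - k) - ((j : ℤ) - k)| = 1 then -γ ((i : ℤ) - k) ((j : ℤ) - k) else 0

/-- The operator `H = L_γ + u δ₀` as a complex matrix on `ℂ^{2k+1}`. -/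
noncomputable def pathH (k : ℕ) (γ : ℤ → ℤ → ℝ) (u : ℝ) :
    Matrix (Fin (2 * k + 1)) (Fin (2 * k + 1)) ℂ :=
  (pathHR k γ u).map (fun x => (x : ℂ))

lemma pathH_isHermitian (k : ℕ) (γ : ℤ → ℤ → ℝ) (u : ℝ)
    (hsym : ∀ v w : ℤ, γ v w = γ w v) : (pathH k γ u).IsHermitian := by
  have hAR : (pathHR k γ u)ᵀ = pathHR k γ u := by
    ext i j
    unfold pathHR
    by_cases h : i = j
    · subst h; rfl
    · show (if j = i then _ else _) = _
      simp only [if_neg h, if_neg (Ne.symm h)]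
      rw [abs_sub_comm, hsym]
  unfold Matrix.IsHermitian pathH
  rw [← Matrix.conjTranspose_map _ (by intro x; simp [Complex.conj_ofReal]),
    show (pathHR k γ u)ᴴ = (pathHR k γ u)ᵀ from rfl, hAR]

/-- Sorted (increasing) enumeration of the eigenvalues of a Hermitian matrix. -/
noncomputable def sortedEig {n : ℕ} {A : Matrix (Fin n) (Fin n) ℂ} (hA : A.IsHermitian) :
    Fin n → ℝ :=
  hA.eigenvalues ∘ Tuple.sort hA.eigenvalues



open Finset



noncomputable def qf {n : ℕ} (A : Matrix (Fin n) (Fin n) ℝ) (x : Fin n → ℂ) : ℝ :=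
  (dotProduct (star x) ((A.map (fun t => (t : ℂ))).mulVec x)).re

lemma qf_eq {n : ℕ} (A : Matrix (Fin n) (Fin n) ℝ) (x : Fin n → ℂ) :
    qf A x = ∑ i, ∑ j, A i j * ((starRingEnd ℂ) (x i) * x j).re := by
  unfold qf
  rw [dotProduct, Complex.re_sum]
  refine Finset.sum_congr rfl fun i _ => ?_
  rw [Matrix.mulVec, dotProduct, Finset.mul_sum, Complex.re_sum]
  refine Finset.sum_congr rfl fun j _ => ?_
  simp only [Matrix.map_apply, Pi.star_apply, Complex.star_def]
  rw [show (starRingEnd ℂ) (x i) * ((A i j : ℂ) * x j)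
      = (A i j : ℂ) * ((starRingEnd ℂ) (x i) * x j) by ring, Complex.re_ofReal_mul]




lemma qf_nonneg_of_dom {n : ℕ} (A : Matrix (Fin n) (Fin n) ℝ)
    (hsym : ∀ i j, A i j = A j i)
    (hdom : ∀ i, ∑ j ∈ Finset.univ.erase i, |A i j| ≤ A i i) (x : Fin n → ℂ) :
    0 ≤ qf A x := by
  classical
  set r : Fin n → ℝ := fun i => ‖x i‖ with hr
  have habs : ∀ i j, -(|A i j| * ((r i ^ 2 + r j ^ 2) / 2))
      ≤ A i j * ((starRingEnd ℂ) (x i) * x j).re := by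
    intro i j
    have h1 : |A i j * ((starRingEnd ℂ) (x i) * x j).re| ≤ |A i j| * (r i * r j) := by
      rw [abs_mul]
      have : |((starRingEnd ℂ) (x i) * x j).re| ≤ r i * r j := by
        calc |((starRingEnd ℂ) (x i) * x j).re| ≤ ‖(starRingEnd ℂ) (x i) * x j‖ :=
              Complex.abs_re_le_norm _
          _ = r i * r j := by simp [hr]
      exact mul_le_mul_of_nonneg_left this (abs_nonneg _)
    have h2 : r i * r j ≤ (r i ^ 2 + r j ^ 2) / 2 := by nlinarith [sq_nonneg (r i - r j)]
    nlinarith [neg_abs_le (A i j * ((starRingEnd ℂ) (x i) * x j).re), abs_nonneg (A i j)]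
  have hdiag : ∀ i, A i i * ((starRingEnd ℂ) (x i) * x i).re = A i i * r i ^ 2 := by
    intro i
    congr 1
    rw [show ((starRingEnd ℂ) (x i) * x i) = (Complex.normSq (x i) : ℂ) by
      rw [mul_comm, Complex.mul_conj], Complex.ofReal_re, hr]
    simp [Complex.normSq_eq_norm_sq]
  rw [qf_eq]
  have hlb : ∀ i, A i i * r i ^ 2
      - ∑ j ∈ Finset.univ.erase i, |A i j| * ((r i ^ 2 + r j ^ 2) / 2)
      ≤ ∑ j, A i j * ((starRingEnd ℂ) (x i) * x j).re := by
    intro i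
    rw [← Finset.add_sum_erase _ _ (Finset.mem_univ i), hdiag i]
    have := Finset.sum_le_sum (fun j (_ : j ∈ Finset.univ.erase i) => habs i j)
    rw [Finset.sum_neg_distrib] at this
    linarith
  have key : ∑ i, (A i i * r i ^ 2
      - ∑ j ∈ Finset.univ.erase i, |A i j| * ((r i ^ 2 + r j ^ 2) / 2))
      ≤ ∑ i, ∑ j, A i j * ((starRingEnd ℂ) (x i) * x j).re :=
    Finset.sum_le_sum fun i _ => hlb i
  refine le_trans ?_ key
  -- rearrange the double sum
  have hsplit : ∀ i, ∑ j ∈ Finset.univ.erase i, |A i j| * ((r i ^ 2 + r j ^ 2) / 2)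
      = (∑ j ∈ Finset.univ.erase i, |A i j| * r i ^ 2 / 2)
        + ∑ j ∈ Finset.univ.erase i, |A i j| * r j ^ 2 / 2 := by
    intro i
    rw [← Finset.sum_add_distrib]
    exact Finset.sum_congr rfl fun j _ => by ring
  have hswap : ∑ i, ∑ j ∈ Finset.univ.erase i, |A i j| * r j ^ 2 / 2
      = ∑ i, ∑ j ∈ Finset.univ.erase i, |A i j| * r i ^ 2 / 2 := by
    have e1 : ∀ (g : Fin n → Fin n → ℝ), (∑ i, ∑ j ∈ Finset.univ.erase i, g i j)
        = ∑ i, ∑ j, if j ≠ i then g i j else 0 := by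
      intro g
      refine Finset.sum_congr rfl fun i _ => ?_
      rw [← Finset.sum_filter, Finset.filter_ne']
    rw [e1, e1, Finset.sum_comm]
    refine Finset.sum_congr rfl fun i _ => Finset.sum_congr rfl fun j _ => ?_
    by_cases h : i ≠ j
    · rw [if_pos h, if_pos (Ne.symm h), hsym]
    · push_neg at h; subst h; simp
  have e2 : ∀ i, ∑ j ∈ Finset.univ.erase i, |A i j| * r i ^ 2 / 2
      = (∑ j ∈ Finset.univ.erase i, |A i j|) * (r i ^ 2 / 2) := by
    intro i
    rw [Finset.sum_mul]
    exact Finset.sum_congr rfl fun j _ => by ring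
  have hterm : ∀ i, A i i * r i ^ 2
      - ∑ j ∈ Finset.univ.erase i, |A i j| * ((r i ^ 2 + r j ^ 2) / 2)
      = (A i i - ∑ j ∈ Finset.univ.erase i, |A i j|) * r i ^ 2
        + ((∑ j ∈ Finset.univ.erase i, |A i j|) * (r i ^ 2 / 2)
          - ∑ j ∈ Finset.univ.erase i, |A i j| * r j ^ 2 / 2) := by
    intro i
    rw [hsplit i, e2 i]
    ring
  rw [Finset.sum_congr rfl fun i _ => hterm i, Finset.sum_add_distrib, Finset.sum_sub_distrib]
  rw [Finset.sum_congr rfl fun i _ => (e2 i).symm, ← hswap]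
  simp only [sub_self, add_zero]
  refine Finset.sum_nonneg fun i _ => mul_nonneg ?_ (sq_nonneg _)
  linarith [hdom i]




lemma qf_subst {n : ℕ} (A : Matrix (Fin n) (Fin n) ℝ) (φ : Fin n → ℝ) (y : Fin n → ℂ) :
    qf A (fun j => (φ j : ℂ) * y j) = qf (Matrix.of fun i j => φ i * A i j * φ j) y := by
  rw [qf_eq, qf_eq]
  refine Finset.sum_congr rfl fun i _ => Finset.sum_congr rfl fun j _ => ?_
  rw [_root_.map_mul, Complex.conj_ofReal, Matrix.of_apply,
    show (φ i : ℂ) * (starRingEnd ℂ) (y i) * ((φ j : ℂ) * y j)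
      = ((φ i * φ j : ℝ) : ℂ) * ((starRingEnd ℂ) (y i) * y j) by push_cast; ring,
    Complex.re_ofReal_mul]
  ring

lemma conj_mul_self_re (z : ℂ) : ((starRingEnd ℂ) z * z).re = Complex.normSq z := by
  rw [mul_comm, Complex.mul_conj, Complex.ofReal_re]

lemma qf_sub_smul_one {n : ℕ} (A : Matrix (Fin n) (Fin n) ℝ) (μ : ℝ) (x : Fin n → ℂ) :
    qf (A - μ • (1 : Matrix (Fin n) (Fin n) ℝ)) x
      = qf A x - μ * ∑ i, Complex.normSq (x i) := by
  rw [qf_eq, qf_eq, Finset.mul_sum, ← Finset.sum_sub_distrib]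
  refine Finset.sum_congr rfl fun i _ => ?_
  have : ∀ j, (A - μ • (1 : Matrix (Fin n) (Fin n) ℝ)) i j * ((starRingEnd ℂ) (x i) * x j).re
      = A i j * ((starRingEnd ℂ) (x i) * x j).re
        - (if i = j then μ * ((starRingEnd ℂ) (x i) * x j).re else 0) := by
    intro j
    by_cases h : i = j
    · subst h
      simp [Matrix.sub_apply, Matrix.smul_apply, Matrix.one_apply_eq]
      ring
    · simp [Matrix.sub_apply, Matrix.smul_apply, Matrix.one_apply_ne h]
      rw [if_neg h]; ring
  rw [Finset.sum_congr rfl fun j _ => this j, Finset.sum_sub_distrib, Finset.sum_ite_eq,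
    if_pos (Finset.mem_univ i), conj_mul_self_re]

lemma qf_lower {n : ℕ} (A : Matrix (Fin n) (Fin n) ℝ) (μ : ℝ) (φ : Fin n → ℝ)
    (hsym : ∀ i j, A i j = A j i)
    (hoff : ∀ i j, i ≠ j → A i j ≤ 0)
    (hφ : ∀ i, 0 < φ i)
    (hsup : ∀ i, μ * φ i ≤ A.mulVec φ i) (x : Fin n → ℂ) :
    μ * ∑ i, Complex.normSq (x i) ≤ qf A x := by
  classical
  set B := A - μ • (1 : Matrix (Fin n) (Fin n) ℝ) with hB
  have hBapp : ∀ i j, B i j = A i j - (if i = j then μ else 0) := by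
    intro i j
    by_cases h : i = j
    · subst h; simp [hB, Matrix.one_apply_eq]
    · simp [hB, Matrix.one_apply_ne h, h]
  set y : Fin n → ℂ := fun i => x i / (φ i : ℂ) with hy
  have hxy : x = fun j => (φ j : ℂ) * y j := by
    funext j
    have hfj : (φ j : ℂ) ≠ 0 := Complex.ofReal_ne_zero.mpr (hφ j).ne'
    show x j = (φ j : ℂ) * (x j / (φ j : ℂ))
    rw [mul_div_cancel₀ _ hfj]
  have hBφ : ∀ i, 0 ≤ B.mulVec φ i := by
    intro i
    have : B.mulVec φ i = A.mulVec φ i - μ * φ i := by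
      rw [Matrix.mulVec, Matrix.mulVec, dotProduct, dotProduct,
        Finset.sum_congr rfl fun j _ => by rw [hBapp i j, sub_mul]]
      rw [Finset.sum_sub_distrib]
      congr 1
      rw [Finset.sum_congr rfl (fun j (_ : j ∈ Finset.univ) => by
        rw [ite_mul, zero_mul] : ∀ j ∈ Finset.univ, (if i = j then μ else 0) * φ j
          = if i = j then μ * φ j else 0), Finset.sum_ite_eq, if_pos (Finset.mem_univ i)]
    rw [this]
    linarith [hsup i]
  have key : 0 ≤ qf (Matrix.of fun i j => φ i * B i j * φ j) y := by
    apply qf_nonneg_of_dom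
    · intro i j
      simp only [Matrix.of_apply, hBapp]
      by_cases h : i = j
      · subst h; ring
      · rw [if_neg h, if_neg (fun hh => h hh.symm), hsym]
        ring
    · intro i
      have habs : ∀ j, j ≠ i → |(Matrix.of fun i j => φ i * B i j * φ j) i j|
          = -(φ i * B i j * φ j) := by
        intro j hj
        rw [Matrix.of_apply, abs_of_nonpos]
        have hBij : B i j ≤ 0 := by
          rw [hBapp, if_neg (fun h => hj h.symm), sub_zero]
          exact hoff i j (fun h => hj h.symm)
        have := mul_nonneg (le_of_lt (hφ i)) (le_of_lt (hφ j))
        nlinarith [hφ i, hφ j]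
      rw [Finset.sum_congr rfl fun j hj => habs j (Finset.ne_of_mem_erase hj)]
      have hS : B.mulVec φ i = B i i * φ i + ∑ j ∈ Finset.univ.erase i, B i j * φ j := by
        rw [Matrix.mulVec, dotProduct, ← Finset.add_sum_erase _ _ (Finset.mem_univ i)]
      have : ∑ j ∈ Finset.univ.erase i, -(φ i * B i j * φ j)
          = -(φ i * ∑ j ∈ Finset.univ.erase i, B i j * φ j) := by
        rw [Finset.mul_sum, ← Finset.sum_neg_distrib]
        exact Finset.sum_congr rfl fun j _ => by ring
      rw [this, Matrix.of_apply]
      have h1 : ∑ j ∈ Finset.univ.erase i, B i j * φ j = B.mulVec φ i - B i i * φ i := by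
        rw [hS]; ring
      rw [h1]
      nlinarith [hBφ i, hφ i]
  have : qf (Matrix.of fun i j => φ i * B i j * φ j) y = qf B x := by
    rw [← qf_subst, ← hxy]
  rw [this, hB, qf_sub_smul_one] at key
  linarith




lemma eig_ge {n : ℕ} {A : Matrix (Fin n) (Fin n) ℝ}
    (hA : (A.map (fun t => (t : ℂ))).IsHermitian) (μ : ℝ)
    (hq : ∀ x : Fin n → ℂ, μ * ∑ i, Complex.normSq (x i) ≤ qf A x) (i : Fin n) :
    μ ≤ hA.eigenvalues i := by
  set v : Fin n → ℂ := ⇑(hA.eigenvectorBasis i) with hv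
  have hav := hA.mulVec_eigenvectorBasis i
  have hnorm : ∑ j, Complex.normSq (v j) = 1 := by
    have h1 : ‖hA.eigenvectorBasis i‖ = 1 := hA.eigenvectorBasis.orthonormal.1 i
    rw [EuclideanSpace.norm_eq] at h1
    have h2 : ∑ j, ‖hA.eigenvectorBasis i j‖ ^ 2 = 1 := by
      have := congrArg (fun t => t ^ 2) h1
      simpa [Real.sq_sqrt (Finset.sum_nonneg fun j _ => sq_nonneg _)] using this
    rw [← h2]
    refine Finset.sum_congr rfl fun j _ => ?_
    have h3 : ‖hA.eigenvectorBasis i j‖ ^ 2 = Complex.normSq (v j) := by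
      rw [Complex.sq_norm]
    exact h3.symm
  have hqf : qf A v = hA.eigenvalues i := by
    unfold qf
    rw [show ((A.map (fun t => (t : ℂ))).mulVec v) = (hA.eigenvalues i • v) from hav,
      dotProduct_smul]
    rw [Complex.real_smul, Complex.re_ofReal_mul, dotProduct, Complex.re_sum]
    rw [Finset.sum_congr rfl fun j _ => by
      rw [Pi.star_apply, Complex.star_def, conj_mul_self_re]]
    rw [hnorm, mul_one]
  have := hq v
  rw [hqf] at this
  rw [hnorm, mul_one] at this
  exact this



local notation "⟪" x ", " y "⟫" => @inner ℂ _ _ x y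

lemma exists_two_eig_le {n : ℕ} {A : Matrix (Fin n) (Fin n) ℂ} (hA : A.IsHermitian) (c : ℝ)
    (V W : EuclideanSpace ℂ (Fin n))
    (hind : ∀ p q : ℂ, (fun j => p * V j + q * W j) = (0 : Fin n → ℂ) → p = 0 ∧ q = 0)
    (hAVW : ∀ p q : ℂ, dotProduct (star (fun j => p * V j + q * W j))
        (A *ᵥ (fun j => p * V j + q * W j))
      = (c : ℂ) * dotProduct (star (fun j => p * V j + q * W j))
        (fun j => p * V j + q * W j)) :
    ∃ i j : Fin n, i ≠ j ∧ hA.eigenvalues i ≤ c ∧ hA.eigenvalues j ≤ c := by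
  classical
  by_contra hcon
  push_neg at hcon
  set b := hA.eigenvectorBasis with hb
  set E := hA.eigenvalues with hE
  -- coordinates of A *ᵥ x
  have hcoord : ∀ (x : EuclideanSpace ℂ (Fin n)) (i : Fin n),
      dotProduct (star (⇑(b i))) (A *ᵥ x) = (E i : ℂ) * dotProduct (star ⇑(b i)) x := by
    intro x i
    rw [Matrix.dotProduct_mulVec]
    have h1 : star (⇑(b i)) ᵥ* A = star (A *ᵥ ⇑(b i)) := by
      rw [Matrix.star_mulVec, hA.eq]
    rw [h1, hA.mulVec_eigenvectorBasis, star_smul, smul_dotProduct]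
    norm_num [Complex.real_smul]
    rfl
  have hrepr : ∀ (x : EuclideanSpace ℂ (Fin n)) (i : Fin n),
      b.repr x i = dotProduct (star ⇑(b i)) x := fun x i => by
    rw [b.repr_apply_apply, EuclideanSpace.inner_eq_star_dotProduct, dotProduct_comm]
  have hsum : ∀ (x y : EuclideanSpace ℂ (Fin n)),
      dotProduct (star (x : Fin n → ℂ)) (y : Fin n → ℂ)
        = ∑ i, (starRingEnd ℂ) (b.repr x i) * (b.repr y i) := by
    intro x y
    have h1 : dotProduct (star (x : Fin n → ℂ)) (y : Fin n → ℂ) = ⟪x, y⟫ := by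
      rw [EuclideanSpace.inner_eq_star_dotProduct, dotProduct_comm]
    rw [h1, ← b.repr.inner_map_map x y]
    rw [EuclideanSpace.inner_eq_star_dotProduct, dotProduct_comm]
    rfl
  -- master contradiction derivation
  have master : ∀ p q : ℂ, ¬(p = 0 ∧ q = 0) →
      (∀ i : Fin n, E i ≤ c →
        b.repr (WithLp.toLp 2 (fun j => p * V j + q * W j : Fin n → ℂ) : EuclideanSpace ℂ (Fin n)) i = 0) → False := by
    intro p q hpq h0
    set x : EuclideanSpace ℂ (Fin n) := (WithLp.toLp 2 (fun j => p * V j + q * W j : Fin n → ℂ) : EuclideanSpace ℂ (Fin n)) with hx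
    have hxne : x ≠ 0 := by
      intro h
      exact hpq (hind p q (congrArg WithLp.ofLp h))
    have hmain : ∑ i, (E i - c) * Complex.normSq (b.repr x i) = 0 := by
      have h1 : dotProduct (star (x : Fin n → ℂ)) (A *ᵥ (x : Fin n → ℂ))
          = (c : ℂ) * dotProduct (star (x : Fin n → ℂ)) (x : Fin n → ℂ) := hAVW p q
      have h2 : dotProduct (star (x : Fin n → ℂ)) (A *ᵥ (x : Fin n → ℂ))
          = ∑ i, (E i : ℂ) * ((starRingEnd ℂ) (b.repr x i) * (b.repr x i)) := by
        refine (hsum x (WithLp.toLp 2 (A *ᵥ (x : Fin n → ℂ)))).trans ?_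
        refine Finset.sum_congr rfl fun i _ => ?_
        rw [hrepr (WithLp.toLp 2 (A *ᵥ (x : Fin n → ℂ))) i,
          show (WithLp.toLp 2 (A *ᵥ (x : Fin n → ℂ)) : EuclideanSpace ℂ (Fin n)).ofLp
            = A *ᵥ (x : Fin n → ℂ) from rfl, hcoord x i,
          ← hrepr x i]
        ring
      have h3 : dotProduct (star (x : Fin n → ℂ)) (x : Fin n → ℂ)
          = ∑ i, (starRingEnd ℂ) (b.repr x i) * (b.repr x i) := hsum x x
      rw [h2, h3, Finset.mul_sum] at h1
      have h4 := congrArg Complex.re h1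
      rw [Complex.re_sum, Complex.re_sum] at h4
      have h5 : ∀ i, ((E i : ℂ) * ((starRingEnd ℂ) (b.repr x i) * (b.repr x i))).re
          = E i * Complex.normSq (b.repr x i) := by
        intro i
        rw [Complex.re_ofReal_mul, mul_comm ((starRingEnd ℂ) _), Complex.mul_conj,
          Complex.ofReal_re]
      have h6 : ∀ i, ((c : ℂ) * ((starRingEnd ℂ) (b.repr x i) * (b.repr x i))).re
          = c * Complex.normSq (b.repr x i) := by
        intro i
        rw [Complex.re_ofReal_mul, mul_comm ((starRingEnd ℂ) _), Complex.mul_conj,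
          Complex.ofReal_re]
      rw [Finset.sum_congr rfl fun i _ => h5 i, Finset.sum_congr rfl fun i _ => h6 i] at h4
      rw [Finset.sum_congr rfl fun i _ => sub_mul (E i) c (Complex.normSq (b.repr x i)),
        Finset.sum_sub_distrib, h4, sub_self]
    have hnonneg : ∀ i ∈ Finset.univ, 0 ≤ (E i - c) * Complex.normSq (b.repr x i) := by
      intro i _
      by_cases h : E i ≤ c
      · rw [h0 i h]
        simp
      · push_neg at h
        exact mul_nonneg (by linarith) (Complex.normSq_nonneg _)
    have hzero := (Finset.sum_eq_zero_iff_of_nonneg hnonneg).mp hmain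
    have hall : ∀ i, b.repr x i = 0 := by
      intro i
      by_cases h : E i ≤ c
      · exact h0 i h
      · push_neg at h
        have := hzero i (Finset.mem_univ i)
        have hne : E i - c ≠ 0 := by linarith
        have : Complex.normSq (b.repr x i) = 0 := by
          rcases mul_eq_zero.mp this with h' | h'
          · exact absurd h' hne
          · exact h'
        exact Complex.normSq_eq_zero.mp this
    apply hxne
    have : b.repr x = 0 := by
      ext i
      exact hall i
    simpa using b.repr.map_eq_zero_iff.mp this
  by_cases hT : ∃ i₀, E i₀ ≤ c
  · obtain ⟨i₀, hi₀⟩ := hT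
    have huniq : ∀ i, E i ≤ c → i = i₀ := by
      intro i hi
      by_contra hne
      exact absurd hi₀ (not_le.mpr (hcon i i₀ hne hi))
    set p := b.repr W i₀ with hp
    set q := -(b.repr V i₀) with hq
    by_cases hpq : p = 0 ∧ q = 0
    · refine master 1 0 (by norm_num) ?_
      intro i hi
      have hii := huniq i hi
      subst hii
      have : (WithLp.toLp 2 (fun j => 1 * V j + 0 * W j : Fin n → ℂ) : EuclideanSpace ℂ (Fin n)) = V := by
        ext j
        simp
      rw [this]
      have := hpq.2
      rw [hq, neg_eq_zero] at this
      exact this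
    · refine master p q hpq ?_
      intro i hi
      have hii := huniq i hi
      subst hii
      have hXpq : (WithLp.toLp 2 (fun j => p * V j + q * W j : Fin n → ℂ) : EuclideanSpace ℂ (Fin n))
          = p • V + q • W := by
        ext j
        simp [Pi.smul_apply]
      rw [hXpq, map_add, _root_.map_smul, _root_.map_smul]
      show p * (b.repr V i) + q * (b.repr W i) = 0
      rw [hp, hq]
      ring
  · push_neg at hT
    refine master 1 0 (by norm_num) ?_
    intro i hi
    exact absurd hi (not_le.mpr (hT i))



lemma cos3 (a t : ℝ) : Real.cos (a - t) + Real.cos (a + t) = 2 * Real.cos a * Real.cos t := by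
  rw [Real.cos_sub, Real.cos_add]; ring

lemma sin3 (a t : ℝ) : Real.sin (a - t) + Real.sin (a + t) = 2 * Real.sin a * Real.cos t := by
  rw [Real.sin_sub, Real.sin_add]; ring

lemma cos_pi_add' (t : ℝ) : Real.cos (π + t) = - Real.cos t := by
  rw [Real.cos_add]; simp

lemma cos_pi_sub' (t : ℝ) : Real.cos (π - t) = - Real.cos t := Real.cos_pi_sub t

lemma sin_pi_div_two_add' (t : ℝ) : Real.sin (π/2 + t) = Real.cos t := by
  rw [Real.sin_add]; simp

noncomputable def Fv (θ : ℝ) : ℤ → ℝ := fun x => Real.cos (θ * ((x : ℝ) + 1/2))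

noncomputable def Fw (θ : ℝ) (k : ℕ) : ℤ → ℝ := fun x => Real.sin (θ * |(x : ℝ) - (k:ℝ)|)

noncomputable def Fphi (θ s : ℝ) (k : ℕ) : ℤ → ℝ :=
  fun x => Real.sin (θ * (|(x : ℝ) - (k:ℝ)| + s))

lemma Fv_eigen (θ : ℝ) (x : ℤ) :
    2 * Fv θ x - Fv θ (x-1) - Fv θ (x+1) = (2 - 2*Real.cos θ) * Fv θ x := by
  have h1 : Fv θ (x-1) = Real.cos (θ * ((x:ℝ) + 1/2) - θ) := by
    unfold Fv; congr 1; push_cast; ring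
  have h2 : Fv θ (x+1) = Real.cos (θ * ((x:ℝ) + 1/2) + θ) := by
    unfold Fv; congr 1; push_cast; ring
  have h0 : Fv θ x = Real.cos (θ * ((x:ℝ) + 1/2)) := rfl
  rw [h0, h1, h2]
  linarith [cos3 (θ * ((x:ℝ) + 1/2)) θ]

section VW
variable (θ : ℝ) (k : ℕ)

lemma Fv_reflL : Fv θ (-1) = Fv θ 0 := by
  unfold Fv
  rw [show θ * (((-1:ℤ):ℝ) + 1/2) = -(θ * (((0:ℤ):ℝ) + 1/2)) by push_cast; ring, Real.cos_neg]

-- branch formulas for Fw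
lemma Fw_left (x : ℤ) (hx : x ≤ (k:ℤ)) : Fw θ k x = Real.sin (θ * ((k:ℝ) - (x:ℝ))) := by
  unfold Fw
  congr 2
  rw [abs_of_nonpos (by exact_mod_cast sub_nonpos.mpr (show (x:ℝ) ≤ (k:ℝ) by exact_mod_cast hx))]
  ring

lemma Fw_right (x : ℤ) (hx : (k:ℤ) ≤ x) : Fw θ k x = Real.sin (θ * ((x:ℝ) - (k:ℝ))) := by
  unfold Fw
  congr 2
  rw [abs_of_nonneg (by exact_mod_cast sub_nonneg.mpr (show (k:ℝ) ≤ (x:ℝ) by exact_mod_cast hx))]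

lemma Fw_eigen (x : ℤ) (hx : x ≠ (k:ℤ)) :
    2 * Fw θ k x - Fw θ k (x-1) - Fw θ k (x+1) = (2 - 2*Real.cos θ) * Fw θ k x := by
  rcases lt_or_gt_of_ne hx with h | h
  · have e0 : Fw θ k x = Real.sin (θ * ((k:ℝ) - (x:ℝ))) := Fw_left θ k x (le_of_lt h)
    have e1 : Fw θ k (x-1) = Real.sin (θ * ((k:ℝ) - (x:ℝ)) + θ) := by
      rw [Fw_left θ k _ (by omega)]; congr 1; push_cast; ring
    have e2 : Fw θ k (x+1) = Real.sin (θ * ((k:ℝ) - (x:ℝ)) - θ) := by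
      rw [Fw_left θ k _ (by omega)]; congr 1; push_cast; ring
    rw [e0, e1, e2]
    linarith [sin3 (θ * ((k:ℝ) - (x:ℝ))) θ]
  · have e0 : Fw θ k x = Real.sin (θ * ((x:ℝ) - (k:ℝ))) := Fw_right θ k x (le_of_lt h)
    have e1 : Fw θ k (x-1) = Real.sin (θ * ((x:ℝ) - (k:ℝ)) - θ) := by
      rw [Fw_right θ k _ (by omega)]; congr 1; push_cast; ring
    have e2 : Fw θ k (x+1) = Real.sin (θ * ((x:ℝ) - (k:ℝ)) + θ) := by
      rw [Fw_right θ k _ (by omega)]; congr 1; push_cast; ring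
    rw [e0, e1, e2]
    linarith [sin3 (θ * ((x:ℝ) - (k:ℝ))) θ]

lemma Fw_center : Fw θ k k = 0 := by
  rw [Fw_left θ k k le_rfl, show (k:ℝ) - (((k:ℤ)):ℝ) = 0 by push_cast; ring, mul_zero,
    Real.sin_zero]

lemma Fw_center_nb : Fw θ k ((k:ℤ)-1) = Real.sin θ ∧ Fw θ k ((k:ℤ)+1) = Real.sin θ := by
  constructor
  · rw [Fw_left θ k _ (by omega)]; congr 1; push_cast; ring
  · rw [Fw_right θ k _ (by omega)]; congr 1; push_cast; ring

variable (hsum : θ * (2*(k:ℝ)+1) = π)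
include hsum

lemma Fv_reflR : Fv θ (2*(k:ℤ)+1) = Fv θ (2*(k:ℤ)) := by
  unfold Fv
  rw [show θ * (((2*(k:ℤ)+1 : ℤ) : ℝ) + 1/2) = π + θ/2 by push_cast; linear_combination hsum,
    show θ * (((2*(k:ℤ) : ℤ) : ℝ) + 1/2) = π - θ/2 by push_cast; linear_combination hsum,
    cos_pi_add', cos_pi_sub']

lemma Fv_center : Fv θ (k:ℤ) = 0 := by
  unfold Fv
  rw [show θ * (((k:ℤ):ℝ) + 1/2) = π/2 by push_cast; linear_combination hsum/2,
    Real.cos_pi_div_two]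

lemma Fv_nbL : Fv θ ((k:ℤ)-1) = Real.sin θ := by
  unfold Fv
  rw [show θ * ((((k:ℤ)-1 : ℤ) : ℝ) + 1/2) = π/2 - θ by push_cast; linear_combination hsum/2,
    Real.cos_pi_div_two_sub]

lemma Fv_nbR : Fv θ ((k:ℤ)+1) = -Real.sin θ := by
  unfold Fv
  rw [show θ * ((((k:ℤ)+1 : ℤ) : ℝ) + 1/2) = π/2 + θ by push_cast; linear_combination hsum/2,
    Real.cos_add]
  simp

lemma Fw_reflL : Fw θ k (-1) = Fw θ k 0 := by
  rw [Fw_left θ k _ (by omega), Fw_left θ k _ (by omega),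
    show θ * ((k:ℝ) - ((-1:ℤ):ℝ)) = π - θ * ((k:ℝ) - ((0:ℤ):ℝ)) by
      push_cast; linear_combination hsum,
    Real.sin_pi_sub]

lemma Fw_reflR : Fw θ k (2*(k:ℤ)+1) = Fw θ k (2*(k:ℤ)) := by
  rw [Fw_right θ k _ (by omega), Fw_right θ k _ (by omega),
    show θ * (((2*(k:ℤ)+1 : ℤ):ℝ) - (k:ℝ)) = π - θ * (((2*(k:ℤ) : ℤ):ℝ) - (k:ℝ)) by
      push_cast; linear_combination hsum,
    Real.sin_pi_sub]

end VW

section Phi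
variable (θ s : ℝ) (k : ℕ)

lemma Fphi_left (x : ℤ) (hx : x ≤ (k:ℤ)) :
    Fphi θ s k x = Real.sin (θ * (((k:ℝ) - (x:ℝ)) + s)) := by
  unfold Fphi
  congr 3
  rw [abs_of_nonpos (by exact_mod_cast sub_nonpos.mpr (show (x:ℝ) ≤ (k:ℝ) by exact_mod_cast hx))]
  ring

lemma Fphi_right (x : ℤ) (hx : (k:ℤ) ≤ x) :
    Fphi θ s k x = Real.sin (θ * (((x:ℝ) - (k:ℝ)) + s)) := by
  unfold Fphi
  congr 3
  rw [abs_of_nonneg (by exact_mod_cast sub_nonneg.mpr (show (k:ℝ) ≤ (x:ℝ) by exact_mod_cast hx))]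

lemma Fphi_eigen (x : ℤ) (hx : x ≠ (k:ℤ)) :
    2 * Fphi θ s k x - Fphi θ s k (x-1) - Fphi θ s k (x+1)
      = (2 - 2*Real.cos θ) * Fphi θ s k x := by
  rcases lt_or_gt_of_ne hx with h | h
  · have e0 := Fphi_left θ s k x (le_of_lt h)
    have e1 : Fphi θ s k (x-1) = Real.sin (θ * (((k:ℝ) - (x:ℝ)) + s) + θ) := by
      rw [Fphi_left θ s k _ (by omega)]; congr 1; push_cast; ring
    have e2 : Fphi θ s k (x+1) = Real.sin (θ * (((k:ℝ) - (x:ℝ)) + s) - θ) := by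
      rw [Fphi_left θ s k _ (by omega)]; congr 1; push_cast; ring
    rw [e0, e1, e2]
    linarith [sin3 (θ * (((k:ℝ) - (x:ℝ)) + s)) θ]
  · have e0 := Fphi_right θ s k x (le_of_lt h)
    have e1 : Fphi θ s k (x-1) = Real.sin (θ * (((x:ℝ) - (k:ℝ)) + s) - θ) := by
      rw [Fphi_right θ s k _ (by omega)]; congr 1; push_cast; ring
    have e2 : Fphi θ s k (x+1) = Real.sin (θ * (((x:ℝ) - (k:ℝ)) + s) + θ) := by
      rw [Fphi_right θ s k _ (by omega)]; congr 1; push_cast; ring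
    rw [e0, e1, e2]
    linarith [sin3 (θ * (((x:ℝ) - (k:ℝ)) + s)) θ]

lemma Fphi_center : Fphi θ s k (k:ℤ) = Real.sin (θ * s) := by
  rw [Fphi_left θ s k _ le_rfl]
  congr 1
  push_cast
  ring

lemma Fphi_nbL : Fphi θ s k ((k:ℤ)-1) = Real.sin (θ * (1 + s)) := by
  rw [Fphi_left θ s k _ (by omega)]; congr 2; push_cast; ring

lemma Fphi_nbR : Fphi θ s k ((k:ℤ)+1) = Real.sin (θ * (1 + s)) := by
  rw [Fphi_right θ s k _ (by omega)]; congr 2; push_cast; ring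

variable (hord : θ * ((k:ℝ) + s + 1/2) = π/2)
include hord

lemma Fphi_reflL : Fphi θ s k (-1) = Fphi θ s k 0 := by
  rw [Fphi_left θ s k _ (by omega), Fphi_left θ s k _ (by omega),
    show θ * (((k:ℝ) - ((-1:ℤ):ℝ)) + s) = π/2 + θ/2 by push_cast; linear_combination hord,
    show θ * (((k:ℝ) - ((0:ℤ):ℝ)) + s) = π/2 - θ/2 by push_cast; linear_combination hord,
    sin_pi_div_two_add', Real.sin_pi_div_two_sub]

lemma Fphi_reflR : Fphi θ s k (2*(k:ℤ)+1) = Fphi θ s k (2*(k:ℤ)) := by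
  rw [Fphi_right θ s k _ (by omega), Fphi_right θ s k _ (by omega),
    show θ * ((((2*(k:ℤ)+1 : ℤ):ℝ) - (k:ℝ)) + s) = π/2 + θ/2 by
      push_cast; linear_combination hord,
    show θ * ((((2*(k:ℤ) : ℤ):ℝ) - (k:ℝ)) + s) = π/2 - θ/2 by
      push_cast; linear_combination hord,
    sin_pi_div_two_add', Real.sin_pi_div_two_sub]

lemma Fphi_pos (hθ : 0 < θ) (hs : 0 < s) (x : ℤ) (hx0 : 0 ≤ x) (hx2 : x ≤ 2*(k:ℤ)) :
    0 < Fphi θ s k x := by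
  unfold Fphi
  apply Real.sin_pos_of_pos_of_lt_pi
  · exact mul_pos hθ (add_pos_of_nonneg_of_pos (abs_nonneg _) hs)
  · have habs : |(x:ℝ) - (k:ℝ)| ≤ (k:ℝ) := by
      rw [abs_le]
      constructor
      · have : (0:ℝ) ≤ (x:ℝ) := by exact_mod_cast hx0
        linarith
      · have : (x:ℝ) ≤ 2*(k:ℝ) := by exact_mod_cast hx2
        linarith
    have h1 : θ * (|(x:ℝ) - (k:ℝ)| + s) ≤ θ * ((k:ℝ) + s) :=
      mul_le_mul_of_nonneg_left (by linarith) (le_of_lt hθ)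
    have h2 : θ * ((k:ℝ) + s) = π/2 - θ/2 := by linear_combination hord
    have := Real.pi_pos
    linarith

end Phi

lemma center_key (u θ : ℝ) (hu : 0 < u) (hθ : 0 < θ) (hts : θ * (2/u) < π/2) :
    2 * Real.cos (θ*(2/u)) * Real.sin θ ≤ u * Real.sin (θ*(2/u)) := by
  set t := θ * (2/u) with ht
  have ht0 : 0 < t := mul_pos hθ (by positivity)
  have hct : 0 < Real.cos t := Real.cos_pos_of_mem_Ioo ⟨by linarith, hts⟩
  have htan := Real.lt_tan ht0 hts
  rw [Real.tan_eq_sin_div_cos, lt_div_iff₀ hct] at htan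
  have hsθ : Real.sin θ ≤ θ := Real.sin_le (le_of_lt hθ)
  have hut : u * t = 2 * θ := by
    rw [ht]; field_simp
  nlinarith [Real.sin_pos_of_pos_of_lt_pi ht0 (by linarith [Real.pi_pos, hts] : t < π)]




lemma pathHR_mulVec (k : ℕ) (u : ℝ) (f : Fin (2*k+1) → ℝ) (i : Fin (2*k+1)) :
    (pathHR k (fun _ _ => 1) u).mulVec f i
      = (∑ j : Fin (2*k+1), if |(i:ℤ) - (j:ℤ)| = 1 then f i - f j else 0)
        + (if (i:ℤ) = (k:ℤ) then u * f i else 0) := by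
  classical
  have hdiagentry : pathHR k (fun _ _ => 1) u i i
      = (∑ w : Fin (2*k+1), if |(i:ℤ) - (w:ℤ)| = 1 then (1:ℝ) else 0)
        + (if (i:ℤ) = (k:ℤ) then u else 0) := by
    unfold pathHR
    rw [if_pos rfl]
    simp only [sub_sub_sub_cancel_right, sub_eq_zero]
  have h1 : ∀ j, pathHR k (fun _ _ => 1) u i j * f j
      = (if j = i then ((∑ w : Fin (2*k+1), if |(i:ℤ) - (w:ℤ)| = 1 then (1:ℝ) else 0)
          + (if (i:ℤ) = (k:ℤ) then u else 0)) * f i else 0)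
        + (if |(i:ℤ) - (j:ℤ)| = 1 then -(f j) else 0) := by
    intro j
    by_cases h : i = j
    · subst h
      rw [hdiagentry, if_pos rfl]
      have hnadj : ¬ |(i:ℤ) - (i:ℤ)| = 1 := by simp
      rw [if_neg hnadj, add_zero]
    · unfold pathHR
      rw [if_neg h, if_neg (Ne.symm h)]
      simp only [sub_sub_sub_cancel_right]
      by_cases hadj : |(i:ℤ) - (j:ℤ)| = 1
      · rw [if_pos hadj, if_pos hadj]
        ring
      · rw [if_neg hadj, if_neg hadj, zero_mul, zero_add]
  rw [Matrix.mulVec, dotProduct, Finset.sum_congr rfl fun j _ => h1 j,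
    Finset.sum_add_distrib, Finset.sum_ite_eq' Finset.univ i, if_pos (Finset.mem_univ i)]
  have h2 : ∀ j : Fin (2*k+1), (if |(i:ℤ) - (j:ℤ)| = 1 then f i - f j else 0)
      = (if |(i:ℤ) - (j:ℤ)| = 1 then (1:ℝ) else 0) * f i
        + (if |(i:ℤ) - (j:ℤ)| = 1 then -(f j) else 0) := by
    intro j
    by_cases hadj : |(i:ℤ) - (j:ℤ)| = 1 <;> simp [hadj] <;> ring
  rw [Finset.sum_congr rfl fun j _ => h2 j, Finset.sum_add_distrib, ← Finset.sum_mul,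
    add_mul, ite_mul, zero_mul]
  ring

lemma sum_ite_coe (n : ℕ) (c : ℤ) (g : ℤ → ℝ) :
    (∑ j : Fin n, if (j:ℤ) = c then g c else 0) = if 0 ≤ c ∧ c < n then g c else 0 := by
  classical
  by_cases h : 0 ≤ c ∧ c < n
  · obtain ⟨h0, hn⟩ := h
    have hlt : c.toNat < n := by omega
    rw [if_pos ⟨h0, hn⟩, Finset.sum_eq_single (⟨c.toNat, hlt⟩ : Fin n)]
    · rw [if_pos (by simp; omega)]
    · intro j _ hj
      rw [if_neg]
      intro hc
      apply hj
      apply Fin.ext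
      simp only []
      omega
    · intro h'
      exact absurd (Finset.mem_univ _) h'
  · rw [if_neg h]
    apply Finset.sum_eq_zero
    intro j _
    rw [if_neg]
    intro hc
    apply h
    refine ⟨by omega, by omega⟩

lemma adj_sum (k : ℕ) (g : ℤ → ℝ) (i : Fin (2*k+1)) :
    (∑ j : Fin (2*k+1), if |(i:ℤ) - (j:ℤ)| = 1 then g (j:ℤ) else 0)
      = (if (i:ℤ) = 0 then 0 else g ((i:ℤ)-1)) + (if (i:ℤ) = 2*k then 0 else g ((i:ℤ)+1)) := by
  classical
  have hsplit : ∀ j : Fin (2*k+1), (if |(i:ℤ) - (j:ℤ)| = 1 then g (j:ℤ) else 0)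
      = (if (j:ℤ) = (i:ℤ)-1 then g ((i:ℤ)-1) else 0)
        + (if (j:ℤ) = (i:ℤ)+1 then g ((i:ℤ)+1) else 0) := by
    intro j
    have habs : |(i:ℤ) - (j:ℤ)| = 1 ↔ ((j:ℤ) = (i:ℤ)-1 ∨ (j:ℤ) = (i:ℤ)+1) := by
      rw [abs_eq (by norm_num : (0:ℤ) ≤ 1)]
      omega
    by_cases h1 : (j:ℤ) = (i:ℤ)-1
    · rw [if_pos (habs.mpr (Or.inl h1)), if_pos h1,
        if_neg (show ¬(j:ℤ) = (i:ℤ)+1 by omega), add_zero, h1]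
    · by_cases h2 : (j:ℤ) = (i:ℤ)+1
      · rw [if_pos (habs.mpr (Or.inr h2)), if_neg h1, if_pos h2, zero_add, h2]
      · rw [if_neg (show ¬|(i:ℤ) - (j:ℤ)| = 1 from fun hc => by
          rcases habs.mp hc with h | h
          · exact h1 h
          · exact h2 h), if_neg h1, if_neg h2, add_zero]
  rw [Finset.sum_congr rfl fun j _ => hsplit j, Finset.sum_add_distrib,
    sum_ite_coe _ _ (fun t => g t), sum_ite_coe _ _ (fun t => g t)]
  have hi := i.isLt
  congr 1
  · by_cases h : (i:ℤ) = 0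
    · rw [if_pos h, if_neg (by push_cast; omega)]
    · rw [if_neg h, if_pos (by push_cast; omega)]
  · by_cases h : (i:ℤ) = 2*k
    · rw [if_pos h, if_neg (by push_cast; omega)]
    · rw [if_neg h, if_pos (by push_cast; omega)]

lemma pathHR_mulVec_ext (k : ℕ) (hk : 1 ≤ k) (u : ℝ) (F : ℤ → ℝ)
    (hL : F (-1) = F 0) (hR : F (2*k+1) = F (2*k)) (i : Fin (2*k+1)) :
    (pathHR k (fun _ _ => 1) u).mulVec (fun j => F (j:ℤ)) i
      = 2 * F (i:ℤ) - F ((i:ℤ)-1) - F ((i:ℤ)+1)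
        + (if (i:ℤ) = (k:ℤ) then u * F (i:ℤ) else 0) := by
  rw [pathHR_mulVec]
  have h2 : ∀ j : Fin (2*k+1), (if |(i:ℤ) - (j:ℤ)| = 1 then F (i:ℤ) - F (j:ℤ) else 0)
      = (if |(i:ℤ) - (j:ℤ)| = 1 then F (i:ℤ) else 0)
        - (if |(i:ℤ) - (j:ℤ)| = 1 then F (j:ℤ) else 0) := by
    intro j
    by_cases hadj : |(i:ℤ) - (j:ℤ)| = 1 <;> simp [hadj]
  rw [Finset.sum_congr rfl fun j _ => h2 j, Finset.sum_sub_distrib,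
    adj_sum k (fun _ => F (i:ℤ)) i, adj_sum k F i]
  have hi := i.isLt
  congr 1
  by_cases h0 : (i:ℤ) = 0
  · have h2k : ¬ (i:ℤ) = 2*k := by omega
    rw [if_pos h0, if_neg h2k, if_pos h0, if_neg h2k]
    rw [show (i:ℤ) - 1 = -1 by omega, show F (-1) = F 0 from hL, show (0:ℤ) = (i:ℤ) by omega]
    ring
  · by_cases h2k : (i:ℤ) = 2*k
    · rw [if_neg h0, if_pos h2k, if_neg h0, if_pos h2k]
      rw [show (i:ℤ) + 1 = 2*k+1 by omega, show F (2*↑k+1) = F (2*↑k) from hR,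
        show (2*(k:ℤ):ℤ) = (i:ℤ) by omega]
      ring
    · rw [if_neg h0, if_neg h2k, if_neg h0, if_neg h2k]
      ring



section Model
variable (k : ℕ) (u : ℝ)

-- abbreviations
noncomputable def thA (k : ℕ) : ℝ := π / (2*(k:ℝ)+1)
noncomputable def thB (k : ℕ) (u : ℝ) : ℝ := π / (2*(k:ℝ)+1+2*(2/u))

variable (hk : 1 ≤ k) (hu : 0 < u)

lemma hnpos : (0:ℝ) < 2*(k:ℝ)+1 := by positivity

include hu in
lemma hdenpos : (0:ℝ) < 2*(k:ℝ)+1+2*(2/u) := by positivity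

lemma thA_pos : 0 < thA k := div_pos Real.pi_pos (hnpos k)

include hu in
lemma thB_pos : 0 < thB k u := div_pos Real.pi_pos (hdenpos k u hu)

lemma thA_sum : thA k * (2*(k:ℝ)+1) = π := by
  unfold thA
  field_simp

include hu in
lemma thB_ord : thB k u * ((k:ℝ) + (2/u) + 1/2) = π/2 := by
  unfold thB
  have h := hdenpos k u hu
  field_simp
  ring

include hk in
lemma sinA_pos : 0 < Real.sin (thA k) := by
  apply Real.sin_pos_of_pos_of_lt_pi (thA_pos k)
  unfold thA
  rw [div_lt_iff₀ (hnpos k)]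
  have : (1:ℝ) ≤ (k:ℝ) := by exact_mod_cast hk
  nlinarith [Real.pi_pos]

-- the supersolution property
include hk hu in
lemma phi_supersolution (i : Fin (2*k+1)) :
    (2 - 2*Real.cos (thB k u)) * Fphi (thB k u) (2/u) k (i:ℤ)
      ≤ (pathHR k (fun _ _ => 1) u).mulVec (fun j => Fphi (thB k u) (2/u) k (j:ℤ)) i := by
  set θ := thB k u
  set s : ℝ := 2/u
  have hord := thB_ord k u hu
  rw [pathHR_mulVec_ext k hk u _ (Fphi_reflL θ s k hord) (by
    have := Fphi_reflR θ s k hord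
    push_cast at this ⊢
    convert this using 2 <;> push_cast <;> ring) i]
  by_cases hc : (i:ℤ) = (k:ℤ)
  · rw [if_pos hc, hc, Fphi_center, Fphi_nbL, Fphi_nbR]
    have hts : θ * (2/u) < π/2 := by
      have h1 : 0 < θ * ((k:ℝ) + 1/2) := by
        apply mul_pos (thB_pos k u hu)
        positivity
      nlinarith [hord]
    have hkey := center_key u θ hu (thB_pos k u hu) hts
    have hexp : Real.sin (θ * (1 + s)) = Real.sin θ * Real.cos (θ*s)
        + Real.cos θ * Real.sin (θ*s) := by
      rw [show θ * (1+s) = θ + θ*s by ring, Real.sin_add]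
    rw [hexp]
    nlinarith [hkey]
  · rw [if_neg hc, Fphi_eigen θ s k (i:ℤ) hc, add_zero]

-- V is an eigenvector
include hk in
lemma V_eigen (i : Fin (2*k+1)) :
    (pathHR k (fun _ _ => 1) u).mulVec (fun j => Fv (thA k) (j:ℤ)) i
      = (2 - 2*Real.cos (thA k)) * Fv (thA k) (i:ℤ) := by
  have hsum := thA_sum k
  rw [pathHR_mulVec_ext k hk u _ (Fv_reflL (thA k)) (by
    have := Fv_reflR (thA k) k hsum
    push_cast at this ⊢
    convert this using 2 <;> push_cast <;> ring) i]
  by_cases hc : (i:ℤ) = (k:ℤ)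
  · rw [if_pos hc, hc, Fv_center (thA k) k hsum, Fv_nbL (thA k) k hsum, Fv_nbR (thA k) k hsum]
    ring
  · rw [if_neg hc, Fv_eigen, add_zero]

-- W is an eigenvector up to a delta at the center
include hk in
lemma W_eigen (i : Fin (2*k+1)) :
    (pathHR k (fun _ _ => 1) u).mulVec (fun j => Fw (thA k) k (j:ℤ)) i
      = (2 - 2*Real.cos (thA k)) * Fw (thA k) k (i:ℤ)
        + (if (i:ℤ) = (k:ℤ) then -(2 * Real.sin (thA k)) else 0) := by
  have hsum := thA_sum k
  rw [pathHR_mulVec_ext k hk u _ (Fw_reflL (thA k) k hsum) (by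
    have := Fw_reflR (thA k) k hsum
    push_cast at this ⊢
    convert this using 2 <;> push_cast <;> ring) i]
  by_cases hc : (i:ℤ) = (k:ℤ)
  · rw [if_pos hc, if_pos hc, hc, Fw_center, (Fw_center_nb (thA k) k).1,
      (Fw_center_nb (thA k) k).2]
    ring
  · rw [if_neg hc, if_neg hc, Fw_eigen (thA k) k (i:ℤ) hc]

end Model



lemma sorted_plumb {n : ℕ} {A : Matrix (Fin n) (Fin n) ℂ} (hA : A.IsHermitian) (h1 : 1 < n)
    (c d : ℝ) (hlow : ∀ i, d ≤ hA.eigenvalues i)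
    (htwo : ∃ i j, i ≠ j ∧ hA.eigenvalues i ≤ c ∧ hA.eigenvalues j ≤ c) :
    0 ≤ sortedEig hA ⟨1, h1⟩ - sortedEig hA ⟨0, by omega⟩ ∧
    sortedEig hA ⟨1, h1⟩ - sortedEig hA ⟨0, by omega⟩ ≤ c - d := by
  obtain ⟨i, j, hij, hi, hj⟩ := htwo
  have hmono : Monotone (hA.eigenvalues ∘ Tuple.sort hA.eigenvalues) :=
    Tuple.monotone_sort hA.eigenvalues
  have hs : ∀ m : Fin n, sortedEig hA m = hA.eigenvalues (Tuple.sort hA.eigenvalues m) :=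
    fun m => rfl
  have h01 : sortedEig hA ⟨0, by omega⟩ ≤ sortedEig hA ⟨1, h1⟩ :=
    hmono (by rw [Fin.mk_le_mk]; omega)
  constructor
  · linarith
  · have hd : d ≤ sortedEig hA ⟨0, by omega⟩ := by rw [hs]; exact hlow _
    set σ := Tuple.sort hA.eigenvalues with hσ
    set j1 := σ.symm i with hj1
    set j2 := σ.symm j with hj2
    have hne : (j1 : ℕ) ≠ (j2 : ℕ) := by
      intro h
      exact hij (by
        have : j1 = j2 := Fin.ext h
        rw [hj1, hj2] at this
        exact σ.symm.injective this)
    have hup : sortedEig hA ⟨1, h1⟩ ≤ c := by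
      rcases (show 1 ≤ (j1:ℕ) ∨ 1 ≤ (j2:ℕ) by omega) with h | h
      · calc sortedEig hA ⟨1, h1⟩ ≤ sortedEig hA j1 := hmono (by rw [Fin.le_def]; simpa using h)
          _ = hA.eigenvalues i := by rw [hs, hj1, Equiv.apply_symm_apply]
          _ ≤ c := hi
      · calc sortedEig hA ⟨1, h1⟩ ≤ sortedEig hA j2 := hmono (by rw [Fin.le_def]; simpa using h)
          _ = hA.eigenvalues j := by rw [hs, hj2, Equiv.apply_symm_apply]
          _ ≤ c := hj
    linarith



-- Now the real work of this file
lemma mulVec_map_ofReal {n : ℕ} (A : Matrix (Fin n) (Fin n) ℝ) (x : Fin n → ℝ) :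
    (A.map (fun t => (t:ℂ))) *ᵥ (fun j => ((x j : ℝ) : ℂ)) = fun i => ((A *ᵥ x) i : ℂ) := by
  funext i
  show ∑ j, (A i j : ℂ) * (x j : ℂ) = ((∑ j, A i j * x j : ℝ) : ℂ)
  rw [Complex.ofReal_sum]
  exact Finset.sum_congr rfl fun j _ => (Complex.ofReal_mul _ _).symm

lemma pathHR_symm (k : ℕ) (u : ℝ) (i j : Fin (2*k+1)) :
    pathHR k (fun _ _ => 1) u i j = pathHR k (fun _ _ => 1) u j i := by
  unfold pathHR
  by_cases h : i = j
  · subst h; rfl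
  · rw [if_neg h, if_neg (Ne.symm h), abs_sub_comm]

lemma pathHR_offdiag (k : ℕ) (u : ℝ) (i j : Fin (2*k+1)) (h : i ≠ j) :
    pathHR k (fun _ _ => 1) u i j ≤ 0 := by
  unfold pathHR
  rw [if_neg h]
  by_cases hadj : |((i:ℤ) - k) - ((j:ℤ) - k)| = 1
  · rw [if_pos hadj]; norm_num
  · rw [if_neg hadj]

section Assemble
variable (k : ℕ) (u : ℝ) (hk : 1 ≤ k) (hu : 0 < u)

include hk hu in
lemma eig_lower_all (i : Fin (2*k+1)) :
    2 - 2*Real.cos (thB k u) ≤ (pathH_isHermitian k (fun _ _ => 1) u (fun _ _ => rfl)).eigenvalues i := by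
  apply eig_ge
  intro x
  apply qf_lower (pathHR k (fun _ _ => 1) u) _ (fun j => Fphi (thB k u) (2/u) k (j:ℤ))
    (pathHR_symm k u) (pathHR_offdiag k u)
  · intro i
    apply Fphi_pos (thB k u) (2/u) k (thB_ord k u hu) (thB_pos k u hu) (by positivity)
    · omega
    · have := i.isLt; omega
  · exact phi_supersolution k u hk hu

include hk in
lemma eig_two_le :
    ∃ i j : Fin (2*k+1), i ≠ j ∧
      (pathH_isHermitian k (fun _ _ => 1) u (fun _ _ => rfl)).eigenvalues i ≤ 2 - 2*Real.cos (thA k) ∧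
      (pathH_isHermitian k (fun _ _ => 1) u (fun _ _ => rfl)).eigenvalues j ≤ 2 - 2*Real.cos (thA k) := by
  set lam := 2 - 2*Real.cos (thA k) with hlam
  set Vc : EuclideanSpace ℂ (Fin (2*k+1)) := WithLp.toLp 2 (fun j => ((Fv (thA k) (j:ℤ) : ℝ) : ℂ)) with hVc
  set Wc : EuclideanSpace ℂ (Fin (2*k+1)) := WithLp.toLp 2 (fun j => ((Fw (thA k) k (j:ℤ) : ℝ) : ℂ)) with hWc
  have hsum := thA_sum k
  have hAV : pathH k (fun _ _ => 1) u *ᵥ (Vc : Fin (2*k+1) → ℂ)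
      = fun i => (lam : ℂ) * Vc i := by
    unfold pathH
    rw [hVc, mulVec_map_ofReal]
    funext i
    rw [V_eigen k u hk i]
    simp only [hlam]
    push_cast
    ring
  have hAW : pathH k (fun _ _ => 1) u *ᵥ (Wc : Fin (2*k+1) → ℂ)
      = fun i => (lam : ℂ) * Wc i
          + (if (i:ℤ) = (k:ℤ) then ((-(2 * Real.sin (thA k)) : ℝ) : ℂ) else 0) := by
    unfold pathH
    rw [hWc, mulVec_map_ofReal]
    funext i
    rw [W_eigen k u hk i]
    simp only [hlam]
    by_cases hc : (i:ℤ) = (k:ℤ)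
    · rw [if_pos hc, if_pos hc]
      push_cast
      ring
    · rw [if_neg hc, if_neg hc]
      push_cast
      ring
  set iC : Fin (2*k+1) := ⟨k, by omega⟩ with hiC
  have hiCz : ((iC : Fin (2*k+1)) : ℤ) = (k:ℤ) := by simp [hiC]
  have hVc0 : Vc iC = 0 := by
    rw [hVc]
    show ((Fv (thA k) ((iC:ℤ)) : ℝ) : ℂ) = 0
    rw [hiCz, Fv_center (thA k) k hsum]
    norm_num
  have hWc0 : Wc iC = 0 := by
    rw [hWc]
    show ((Fw (thA k) k ((iC:ℤ)) : ℝ) : ℂ) = 0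
    rw [hiCz, Fw_center (thA k) k]
    norm_num
  apply exists_two_eig_le (pathH_isHermitian k (fun _ _ => 1) u (fun _ _ => rfl)) lam Vc Wc
  · -- independence
    intro p q h
    set iL : Fin (2*k+1) := ⟨k-1, by omega⟩ with hiL
    set iR : Fin (2*k+1) := ⟨k+1, by omega⟩ with hiR
    have hiLz : ((iL : Fin (2*k+1)) : ℤ) = (k:ℤ) - 1 := by
      have h : (iL : ℕ) = k - 1 := rfl
      omega
    have hiRz : ((iR : Fin (2*k+1)) : ℤ) = (k:ℤ) + 1 := by
      have h : (iR : ℕ) = k + 1 := rfl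
      omega
    have hL := congrFun h iL
    have hR := congrFun h iR
    simp only [hVc, hWc, Pi.zero_apply] at hL hR
    rw [hiLz] at hL
    rw [hiRz] at hR
    rw [Fv_nbL (thA k) k hsum, (Fw_center_nb (thA k) k).1] at hL
    rw [Fv_nbR (thA k) k hsum, (Fw_center_nb (thA k) k).2] at hR
    have hsin : ((Real.sin (thA k) : ℝ) : ℂ) ≠ 0 := by
      exact_mod_cast (sinA_pos k hk).ne'
    have h1 : (p + q) * ((Real.sin (thA k) : ℝ) : ℂ) = 0 := by
      rw [add_mul]
      push_cast at hL ⊢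
      linear_combination hL
    have h2 : (-p + q) * ((Real.sin (thA k) : ℝ) : ℂ) = 0 := by
      rw [add_mul]
      push_cast at hR ⊢
      linear_combination hR
    have e1 : p + q = 0 := by
      rcases mul_eq_zero.mp h1 with h' | h'
      · exact h'
      · exact absurd h' hsin
    have e2 : -p + q = 0 := by
      rcases mul_eq_zero.mp h2 with h' | h'
      · exact h'
      · exact absurd h' hsin
    constructor
    · linear_combination (e1 - e2) / 2
    · linear_combination (e1 + e2) / 2
  · -- quadratic form on span
    intro p q
    set x : Fin (2*k+1) → ℂ := fun j => p * Vc j + q * Wc j with hx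
    have hAx : pathH k (fun _ _ => 1) u *ᵥ x
        = fun i => (lam : ℂ) * x i
            + q * (if (i:ℤ) = (k:ℤ) then ((-(2 * Real.sin (thA k)) : ℝ) : ℂ) else 0) := by
      funext i
      have hlin : (pathH k (fun _ _ => 1) u *ᵥ x) i
          = p * (pathH k (fun _ _ => 1) u *ᵥ (Vc : Fin (2*k+1) → ℂ)) i
            + q * (pathH k (fun _ _ => 1) u *ᵥ (Wc : Fin (2*k+1) → ℂ)) i := by
        simp only [Matrix.mulVec, dotProduct, hx, Finset.mul_sum, ← Finset.sum_add_distrib]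
        exact Finset.sum_congr rfl fun j _ => by ring
      rw [hlin]
      simp only [hAV, hAW, hx]
      ring
    rw [dotProduct, dotProduct, hAx, Finset.mul_sum]
    have hterm : ∀ j : Fin (2*k+1), star x j * ((lam : ℂ) * x j
        + q * (if (j:ℤ) = (k:ℤ) then ((-(2 * Real.sin (thA k)) : ℝ) : ℂ) else 0))
        = (lam:ℂ) * (star x j * x j)
          + (if j = iC then star x j * (q * ((-(2 * Real.sin (thA k)) : ℝ) : ℂ)) else 0) := by
      intro j
      have hcond : ((j:ℤ) = (k:ℤ)) ↔ (j = iC) := by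
        constructor
        · intro h
          apply Fin.ext
          have h2 : (iC : ℕ) = k := rfl
          omega
        · intro h; subst h; exact hiCz
      by_cases hc : j = iC
      · rw [if_pos (hcond.mpr hc), if_pos hc]
        ring
      · rw [if_neg (fun hh => hc (hcond.mp hh)), if_neg hc]
        ring
    rw [Finset.sum_congr rfl fun j _ => hterm j, Finset.sum_add_distrib,
      Finset.sum_ite_eq' Finset.univ iC
        (fun j => star x j * (q * ((-(2 * Real.sin (thA k)) : ℝ) : ℂ))),
      if_pos (Finset.mem_univ iC)]
    have hx0 : star x iC = 0 := by
      rw [hx]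
      show star (p * Vc iC + q * Wc iC) = 0
      rw [hVc0, hWc0]
      simp
    rw [hx0, zero_mul, add_zero]

end Assemble



lemma key_arith (u n m : ℝ) (hu : 0 < u) (hn1 : 1 ≤ n) (hnm : n ≤ m) (hmn : m - n = 4/u) :
    π^2 * (1/n^2 - 1/m^2) ≤ 8*π^2/(u*n^3) := by
  have hπ := Real.pi_pos
  have hn0 : (0:ℝ) < n := by linarith
  have hm0 : (0:ℝ) < m := by linarith
  have e1 : 1/n^2 - 1/m^2 = (m-n)*(m+n)/(n^2*m^2) := by
    field_simp
    ring
  rw [e1, hmn]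
  have h2 : (4/u)*(m+n)/(n^2*m^2) ≤ 8/(u*n^3) := by
    rw [div_le_div_iff₀ (by positivity) (by positivity)]
    have hprod : 0 ≤ 4*n^2*((2*m+n)*(m-n)) := by
      apply mul_nonneg (by positivity)
      apply mul_nonneg (by linarith) (by linarith)
    have e2 : 4/u*(m+n)*(u*n^3) = 4*n^3*(m+n) := by
      field_simp
    rw [e2]
    nlinarith [hprod]
  calc π^2 * ((4/u)*(m+n)/(n^2*m^2)) ≤ π^2 * (8/(u*n^3)) := by nlinarith [sq_nonneg π, h2]
    _ = 8*π^2/(u*n^3) := by ring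

lemma diff_bound (k : ℕ) (u : ℝ) (hu : 0 < u) :
    2*Real.cos (thB k u) - 2*Real.cos (thA k) ≤ 8*π^2/(u * (2*(k:ℝ)+1)^3) := by
  have hπ := Real.pi_pos
  set n : ℝ := 2*(k:ℝ)+1 with hn
  set m : ℝ := 2*(k:ℝ)+1+2*(2/u) with hm
  have hn1 : (1:ℝ) ≤ n := by rw [hn]; have : (0:ℝ) ≤ (k:ℝ) := Nat.cast_nonneg k; linarith
  have hnm : n ≤ m := by
    rw [hn, hm]
    have : 0 < 2*(2/u) := by positivity
    linarith
  have hn0 : (0:ℝ) < n := by linarith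
  have hm0 : (0:ℝ) < m := by linarith
  have hmn : m - n = 4/u := by rw [hn, hm]; ring
  set a : ℝ := thB k u with ha
  set b : ℝ := thA k with hb
  have hav : a = π/m := rfl
  have hbv : b = π/n := rfl
  have ha0 : 0 < a := by rw [hav]; positivity
  have hb0 : 0 < b := by rw [hbv]; positivity
  have hab : a ≤ b := by
    rw [hav, hbv]
    exact div_le_div_of_nonneg_left (le_of_lt hπ) hn0 hnm
  have hbπ : b ≤ π := by
    rw [hbv, div_le_iff₀ hn0]
    nlinarith
  have hba : b^2 - a^2 = π^2 * (1/n^2 - 1/m^2) := by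
    rw [hav, hbv]
    field_simp
  have hcc : Real.cos a - Real.cos b
      = 2 * Real.sin ((a+b)/2) * Real.sin ((b-a)/2) := by
    rw [Real.cos_sub_cos]
    rw [show (a-b)/2 = -((b-a)/2) by ring, Real.sin_neg]
    ring
  have hs1 : Real.sin ((a+b)/2) ≤ (a+b)/2 := Real.sin_le (by linarith)
  have hs2 : Real.sin ((b-a)/2) ≤ (b-a)/2 := Real.sin_le (by linarith)
  have hs1n : 0 ≤ Real.sin ((a+b)/2) :=
    Real.sin_nonneg_of_nonneg_of_le_pi (by linarith) (by linarith)
  have hs2n : 0 ≤ Real.sin ((b-a)/2) :=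
    Real.sin_nonneg_of_nonneg_of_le_pi (by linarith) (by linarith)
  have hmain : Real.cos a - Real.cos b ≤ (b^2 - a^2)/2 := by
    rw [hcc]
    nlinarith
  have hkey := key_arith u n m hu hn1 hnm hmn
  linarith [hba, hkey, hmain]


lemma gap_bounds (k : ℕ) (hk : 1 ≤ k) (u : ℝ) (hu : 0 < u) (h1 : 1 < 2*k+1) (h0 : 0 < 2*k+1) :
    0 ≤ sortedEig (pathH_isHermitian k (fun _ _ => 1) u (fun _ _ => rfl)) ⟨1, h1⟩
        - sortedEig (pathH_isHermitian k (fun _ _ => 1) u (fun _ _ => rfl)) ⟨0, h0⟩ ∧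
      sortedEig (pathH_isHermitian k (fun _ _ => 1) u (fun _ _ => rfl)) ⟨1, h1⟩
        - sortedEig (pathH_isHermitian k (fun _ _ => 1) u (fun _ _ => rfl)) ⟨0, h0⟩
          ≤ 2*Real.cos (thB k u) - 2*Real.cos (thA k) := by
  obtain ⟨hnn, hub⟩ := sorted_plumb (pathH_isHermitian k (fun _ _ => 1) u (fun _ _ => rfl)) h1
    (2 - 2*Real.cos (thA k)) (2 - 2*Real.cos (thB k u))
    (eig_lower_all k u hk hu) (eig_two_le k u hk)
  exact ⟨hnn, by linarith⟩

/-- For `H_k = L + u δ₀` with `u > 0`, the rescaled spectral gap `(2k+1)² Γ(k)` tends to 0. -/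
theorem rescaled_gap_tendsto_zero (u : ℝ) (hu : 0 < u) :
    Tendsto (fun k : ℕ => ((2 * (k + 1) + 1 : ℕ) : ℝ) ^ 2 *
        (sortedEig (pathH_isHermitian (k + 1) (fun _ _ => 1) u (fun _ _ => rfl)) ⟨1, by omega⟩ -
         sortedEig (pathH_isHermitian (k + 1) (fun _ _ => 1) u (fun _ _ => rfl)) ⟨0, by omega⟩))
      atTop (nhds 0) := by
  have hπ := Real.pi_pos
  set C : ℝ := 8*π^2/u with hC
  have hC0 : 0 ≤ C := by positivity
  apply squeeze_zero (g := fun k : ℕ => C * (1/((k:ℝ)+1)))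
  · intro k
    exact mul_nonneg (by positivity)
      (gap_bounds (k+1) (by omega) u hu (by omega) (by omega)).1
  · intro k
    have hg := (gap_bounds (k+1) (by omega) u hu (by omega) (by omega)).2
    have hd := diff_bound (k+1) u hu
    have hN : ((2 * (k + 1) + 1 : ℕ) : ℝ) = 2*((k+1 : ℕ):ℝ)+1 := by push_cast; ring
    set N : ℝ := ((2 * (k + 1) + 1 : ℕ) : ℝ) with hNdef
    have hN3 : (3:ℝ) ≤ N := by
      rw [hNdef]
      push_cast
      linarith [Nat.cast_nonneg (α := ℝ) k]
    have hN0 : (0:ℝ) < N := by linarith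
    calc N ^ 2 * (sortedEig (pathH_isHermitian (k + 1) (fun _ _ => 1) u (fun _ _ => rfl)) ⟨1, by omega⟩ -
         sortedEig (pathH_isHermitian (k + 1) (fun _ _ => 1) u (fun _ _ => rfl)) ⟨0, by omega⟩)
        ≤ N ^ 2 * (2*Real.cos (thB (k+1) u) - 2*Real.cos (thA (k+1))) :=
          mul_le_mul_of_nonneg_left hg (sq_nonneg N)
      _ ≤ N ^ 2 * (8*π^2/(u * N^3)) := by
          apply mul_le_mul_of_nonneg_left _ (sq_nonneg N)
          rw [hN]
          exact hd
      _ = C * (1/N) := by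
          rw [hC]
          field_simp
      _ ≤ C * (1/((k:ℝ)+1)) := by
          apply mul_le_mul_of_nonneg_left _ hC0
          apply one_div_le_one_div_of_le (by positivity)
          rw [hNdef]
          push_cast
          linarith [Nat.cast_nonneg (α := ℝ) k]
  · simpa using tendsto_one_div_add_atTop_nhds_zero_nat.const_mul C
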